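/- Over a field k of characteristic ≠ 2, 3, the quadratic map cr: P² ⇢ P², [u₀:u₁:u₂] ↦ [u₀² + 3u₁² - u₂² : u₀u₂ + u₂² : u₁u₂], is a Cremona transformation with inverse given by [v₀:v₁:v₂] ↦ [v₀v₁ + v₁² - 3v₂² : v₀v₂ + 2v₁v₂ : v₁² + 3v₂²]. -/
import Mathlib


open MvPolynomial

/-- The three quadrics defining the Cremona map
`cr : [u₀:u₁:u₂] ↦ [u₀² + 3u₁² - u₂² : u₀u₂ + u₂² : u₁u₂]`. -/
noncomputable def crPoly (k : Type) [Field k] : Fin 3 → MvPolynomial (Fin 3) k :=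
  ![X 0 ^ 2 + 3 * X 1 ^ 2 - X 2 ^ 2, X 0 * X 2 + X 2 ^ 2, X 1 * X 2]

/-- The three quadrics defining the map
`[v₀:v₁:v₂] ↦ [v₀v₁ + v₁² - 3v₂² : v₀v₂ + 2v₁v₂ : v₁² + 3v₂²]`. -/
noncomputable def crInvPoly (k : Type) [Field k] : Fin 3 → MvPolynomial (Fin 3) k :=
  ![X 0 * X 1 + X 1 ^ 2 - 3 * X 2 ^ 2, X 0 * X 2 + 2 * X 1 * X 2, X 1 ^ 2 + 3 * X 2 ^ 2]

lemma threeNeZeroAux (k : Type) [Field k] (h3 : ringChar k ≠ 3) : (3 : k) ≠ 0 := by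
  intro h
  have hd : ringChar k ∣ 3 := ringChar.dvd (by exact_mod_cast h)
  rcases (Nat.prime_three.eq_one_or_self_of_dvd _ hd) with h1 | h1
  · exact CharP.ringChar_ne_one h1
  · exact h3 h1

/-- Over a field `k` of characteristic `≠ 2, 3`, the quadratic map
`cr : P² ⇢ P²`, `[u₀:u₁:u₂] ↦ [u₀² + 3u₁² - u₂² : u₀u₂ + u₂² : u₁u₂]` is a Cremona
transformation with inverse `[v₀:v₁:v₂] ↦ [v₀v₁ + v₁² - 3v₂² : v₀v₂ + 2v₁v₂ : v₁² + 3v₂²]`: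
both compositions agree with the identity up to multiplication by a nonzero common
polynomial factor. -/
theorem cremona_quadratic_inverse (k : Type) [Field k]
    (h2 : ringChar k ≠ 2) (h3 : ringChar k ≠ 3) :
    (∃ c : MvPolynomial (Fin 3) k, c ≠ 0 ∧
      ∀ j : Fin 3, aeval (crPoly k) (crInvPoly k j) = c * X j) ∧
    (∃ c' : MvPolynomial (Fin 3) k, c' ≠ 0 ∧
      ∀ j : Fin 3, aeval (crInvPoly k) (crPoly k j) = c' * X j) := by
  constructor
  · refine ⟨X 0 ^ 2 * X 2 + 2 * X 0 * X 2 ^ 2 + 3 * X 1 ^ 2 * X 2 + X 2 ^ 3, ?_, ?_⟩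
    · intro hc
      have h := congrArg (eval ![0, 0, 1]) hc
      simp at h
    · have e0 : aeval (crPoly k) (crInvPoly k 0) =
          (X 0 ^ 2 * X 2 + 2 * X 0 * X 2 ^ 2 + 3 * X 1 ^ 2 * X 2 + X 2 ^ 3) * X 0 := by
        simp only [crPoly, crInvPoly, map_add, map_sub, map_mul, map_pow, map_ofNat,
          aeval_X, Matrix.cons_val_zero, Matrix.cons_val_one, Matrix.head_cons,
          Matrix.cons_val_two, Matrix.tail_cons]
        ring
      have e1 : aeval (crPoly k) (crInvPoly k 1) =
          (X 0 ^ 2 * X 2 + 2 * X 0 * X 2 ^ 2 + 3 * X 1 ^ 2 * X 2 + X 2 ^ 3) * X 1 := by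
        simp only [crPoly, crInvPoly, map_add, map_sub, map_mul, map_pow, map_ofNat,
          aeval_X, Matrix.cons_val_zero, Matrix.cons_val_one, Matrix.head_cons,
          Matrix.cons_val_two, Matrix.tail_cons]
        ring
      have e2 : aeval (crPoly k) (crInvPoly k 2) =
          (X 0 ^ 2 * X 2 + 2 * X 0 * X 2 ^ 2 + 3 * X 1 ^ 2 * X 2 + X 2 ^ 3) * X 2 := by
        simp only [crPoly, crInvPoly, map_add, map_sub, map_mul, map_pow, map_ofNat,
          aeval_X, Matrix.cons_val_zero, Matrix.cons_val_one, Matrix.head_cons,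
          Matrix.cons_val_two, Matrix.tail_cons]
        ring
      intro j
      fin_cases j
      · exact e0
      · exact e1
      · exact e2
  · refine ⟨X 0 * X 1 ^ 2 + 2 * X 1 ^ 3 + 3 * X 0 * X 2 ^ 2 + 6 * X 1 * X 2 ^ 2, ?_, ?_⟩
    · intro hc
      have h := congrArg (eval ![1, 1, 0]) hc
      simp at h
      exact threeNeZeroAux k h3 (by linear_combination h)
    · have e0 : aeval (crInvPoly k) (crPoly k 0) =
          (X 0 * X 1 ^ 2 + 2 * X 1 ^ 3 + 3 * X 0 * X 2 ^ 2 + 6 * X 1 * X 2 ^ 2) * X 0 := by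
        simp only [crPoly, crInvPoly, map_add, map_sub, map_mul, map_pow, map_ofNat,
          aeval_X, Matrix.cons_val_zero, Matrix.cons_val_one, Matrix.head_cons,
          Matrix.cons_val_two, Matrix.tail_cons]
        ring
      have e1 : aeval (crInvPoly k) (crPoly k 1) =
          (X 0 * X 1 ^ 2 + 2 * X 1 ^ 3 + 3 * X 0 * X 2 ^ 2 + 6 * X 1 * X 2 ^ 2) * X 1 := by
        simp only [crPoly, crInvPoly, map_add, map_sub, map_mul, map_pow, map_ofNat,
          aeval_X, Matrix.cons_val_zero, Matrix.cons_val_one, Matrix.head_cons,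
          Matrix.cons_val_two, Matrix.tail_cons]
        ring
      have e2 : aeval (crInvPoly k) (crPoly k 2) =
          (X 0 * X 1 ^ 2 + 2 * X 1 ^ 3 + 3 * X 0 * X 2 ^ 2 + 6 * X 1 * X 2 ^ 2) * X 2 := by
        simp only [crPoly, crInvPoly, map_add, map_sub, map_mul, map_pow, map_ofNat,
          aeval_X, Matrix.cons_val_zero, Matrix.cons_val_one, Matrix.head_cons,
          Matrix.cons_val_two, Matrix.tail_cons]
        ring
      intro j
      fin_cases j
      · exact e0
      · exact e1
      · exact e2
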